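/- arXiv:2306.03058 — 4 statements merged into one kernel-verified Lean document; each statement's English description precedes it below -/
import Mathlib

section
/- If a reliable-broadcast DAG satisfies Validity (an honest validator holding a vertex also holds its entire causal history) and Non-equivocation (any two honest validators holding a vertex from the same validator in the same round hold identical vertices), then it satisfies Completeness: any two honest validators holding the same vertex v have identical causal histories of v in their local views. -/
/-- A DAG vertex: authored by a validator, in a round, with a payload and a set
of parent labels (author, round) pointing to strictly smaller rounds. -/
structure Vertex (V : Type) where
  author : V
  round : ℕ
  payload : ℕ
  parents : Set (V × ℕ)

/-- The edge relation: `u` points to `w` if `w`'s label is among `u`'s parents. -/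
def edgeTo {V : Type} (u w : Vertex V) : Prop := (w.author, w.round) ∈ u.parents

/-- Causal history of `v` inside a local view: vertices of the view reachable from `v`
following edges within the view. -/
def causalHistory {V : Type} (view : Set (Vertex V)) (v : Vertex V) : Set (Vertex V) :=
  {u | u ∈ view ∧ Relation.ReflTransGen (fun a b => a ∈ view ∧ b ∈ view ∧ edgeTo a b) v u}

/-- Validity: an honest validator holding a vertex holds all its parents (hence,
inductively, its entire causal history). -/
def ValidView {V : Type} (view : Set (Vertex V)) : Prop :=
  ∀ u ∈ view, ∀ p ∈ u.parents, ∃ w ∈ view, (w.author, w.round) = p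

lemma ch_subset {V : Type} (view₁ view₂ : Set (Vertex V))
    (hvalid₂ : ValidView view₂)
    (hnoneq : ∀ u ∈ view₁, ∀ w ∈ view₂,
      u.author = w.author → u.round = w.round → u = w)
    (v : Vertex V) (hv₂ : v ∈ view₂) :
    causalHistory view₁ v ⊆ causalHistory view₂ v := by
  rintro u ⟨hu1, hreach⟩
  suffices h : u ∈ view₂ ∧ Relation.ReflTransGen
      (fun a b => a ∈ view₂ ∧ b ∈ view₂ ∧ edgeTo a b) v u from ⟨h.1, h.2⟩
  induction hreach with
  | refl => exact ⟨hv₂, Relation.ReflTransGen.refl⟩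
  | tail hab hstep ih =>
    obtain ⟨ha1, hb1, he⟩ := hstep
    obtain ⟨ha2, hpath⟩ := ih ha1
    obtain ⟨w, hw2, hwlab⟩ := hvalid₂ _ ha2 _ he
    obtain ⟨h1, h2⟩ := Prod.mk.injEq .. ▸ hwlab
    have := hnoneq _ hb1 _ hw2 h1.symm h2.symm
    subst this
    exact ⟨hw2, hpath.tail ⟨ha2, hw2, he⟩⟩

/-- Completeness from Validity and Non-equivocation: two honest validators holding
the same vertex `v` have identical causal histories of `v`. -/
theorem completeness_of_validity_nonequivocation {V : Type}
    (view₁ view₂ : Set (Vertex V))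
    (hvalid₁ : ValidView view₁) (hvalid₂ : ValidView view₂)
    (hnoneq : ∀ u ∈ view₁, ∀ w ∈ view₂,
      u.author = w.author → u.round = w.round → u = w)
    (v : Vertex V) (hv₁ : v ∈ view₁) (hv₂ : v ∈ view₂) :
    causalHistory view₁ v = causalHistory view₂ v := by
  apply Set.Subset.antisymm
  · exact ch_subset view₁ view₂ hvalid₂ hnoneq v hv₂
  · exact ch_subset view₂ view₁ hvalid₁
      (fun u hu w hw h1 h2 => (hnoneq w hw u hu h1.symm h2.symm).symm) v hv₁
end

section
/- Let P be an anchor-ordering protocol with the first-anchor agreement property: whenever all honest validators use the same round-to-anchor mapping F starting from a common round, they agree on the first anchor each of them orders. Then in the Shoal composition—where validators repeatedly run P from a current round with a mapping F deterministically derived from previously ordered anchors' causal histories, order the first ordered anchor, and restart P from the next round—the locally ordered lists of anchors of any two honest validators are such that one is a prefix of the other. -/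
/-- The Shoal state after `k` completed instances: the current anchor-selection
mapping `F` and the current starting round. `P view r F` returns the first ordered
anchor of the instance of the underlying protocol started at round `r` with
mapping `F`, together with its round. The next mapping is derived deterministically
(`upd`) from the ordered anchor (by Completeness, its causal history is agreed upon,
so it is a function of the anchor). -/
def shoalState {View A : Type}
    (P : View → ℕ → (ℕ → A) → A × ℕ) (view : View)
    (F₀ : ℕ → A) (upd : A → (ℕ → A)) : ℕ → (ℕ → A) × ℕ
  | 0 => (F₀, 0)
  | k + 1 =>
      let s := shoalState P view F₀ upd k
      let o := P view s.2 s.1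
      (upd o.1, o.2 + 1)

/-- The `k`-th anchor ordered in the Shoal composition, with its round. -/
def shoalAnchor {View A : Type}
    (P : View → ℕ → (ℕ → A) → A × ℕ) (view : View)
    (F₀ : ℕ → A) (upd : A → (ℕ → A)) (k : ℕ) : A × ℕ :=
  P view (shoalState P view F₀ upd k).2 (shoalState P view F₀ upd k).1

/-- Shoal prefix agreement: if the underlying protocol `P` satisfies first-anchor
agreement (honest validators starting from a common round with a common mapping
order the same first anchor, in the same round), then in the Shoal composition all
honest validators order the same sequence of anchors; in particular any two honest
validators' ordered anchor lists are prefix-compatible. -/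
theorem shoal_prefix_agreement {View A I : Type}
    (P : View → ℕ → (ℕ → A) → A × ℕ)
    (views : I → View) (Honest : Set I)
    (F₀ : ℕ → A) (upd : A → (ℕ → A))
    (hFirstAnchorAgreement : ∀ (r : ℕ) (F : ℕ → A), ∀ i ∈ Honest, ∀ j ∈ Honest,
      P (views i) r F = P (views j) r F) :
    ∀ i ∈ Honest, ∀ j ∈ Honest, ∀ k : ℕ,
      shoalAnchor P (views i) F₀ upd k = shoalAnchor P (views j) F₀ upd k := by
  intro i hi j hj k
  have hs : ∀ k, shoalState P (views i) F₀ upd k = shoalState P (views j) F₀ upd k := by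
    intro k
    induction k with
    | zero => rfl
    | succ n ih =>
      simp only [shoalState, ih, hFirstAnchorAgreement _ _ i hi j hj]
  unfold shoalAnchor
  rw [hs, hFirstAnchorAgreement _ _ i hi j hj]
end

section
/- Under the assumptions of the Shoal prefix-agreement lemma, and additionally assuming each validator orders vertices by sequentially processing its ordered anchors and appending the not-yet-ordered vertices of each anchor's causal history according to a fixed deterministic rule, the total orders produced by any two honest validators agree: one validator's ordered sequence of vertices is a prefix of the other's. -/
/-- Process one ordered anchor: append the deterministic sequencing of the
not-yet-ordered part of its causal history, and record those vertices as ordered. -/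
def stepOrder {A X : Type} [DecidableEq X]
    (hist : A → Finset X) (ord : Finset X → List X)
    (acc : List X × Finset X) (a : A) : List X × Finset X :=
  (acc.1 ++ ord (hist a \ acc.2), acc.2 ∪ hist a)

/-- The total vertex ordering produced from a list of ordered anchors by
sequentially processing them with the deterministic rule `ord`. -/
def totalOrder {A X : Type} [DecidableEq X]
    (hist : A → Finset X) (ord : Finset X → List X) (anchors : List A) : List X :=
  (anchors.foldl (stepOrder hist ord) ([], ∅)).1

lemma foldl_prefix {A X : Type} [DecidableEq X]
    (hist : A → Finset X) (ord : Finset X → List X) :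
    ∀ (l : List A) (acc : List X × Finset X),
      acc.1 <+: (l.foldl (stepOrder hist ord) acc).1 := by
  intro l
  induction l with
  | nil => intro acc; simp
  | cons a t ih =>
    intro acc
    simp only [List.foldl_cons]
    exact (show acc.1 <+: (stepOrder hist ord acc a).1 from acc.1.prefix_append _).trans
      (ih (stepOrder hist ord acc a))

lemma totalOrder_mono {A X : Type} [DecidableEq X]
    (hist : A → Finset X) (ord : Finset X → List X)
    {l₁ l₂ : List A} (h : l₁ <+: l₂) :
    totalOrder hist ord l₁ <+: totalOrder hist ord l₂ := by
  obtain ⟨t, rfl⟩ := h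
  unfold totalOrder
  rw [List.foldl_append]
  exact foldl_prefix hist ord t _

/-- If two honest validators' ordered anchor lists are prefix-compatible (as
guaranteed by the Shoal prefix-agreement lemma), and both use the same agreed
causal-history function (DAG Completeness) and the same deterministic sequencing
rule, then the total vertex orderings they produce are prefix-compatible. -/
theorem shoal_total_order_prefix {A X : Type} [DecidableEq X]
    (hist : A → Finset X) (ord : Finset X → List X)
    (anchors₁ anchors₂ : List A)
    (hprefix : anchors₁ <+: anchors₂ ∨ anchors₂ <+: anchors₁) :
    totalOrder hist ord anchors₁ <+: totalOrder hist ord anchors₂ ∨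
      totalOrder hist ord anchors₂ <+: totalOrder hist ord anchors₁ := by
  rcases hprefix with h | h
  · exact Or.inl (totalOrder_mono hist ord h)
  · exact Or.inr (totalOrder_mono hist ord h)
end

section
/- In a round-based DAG with n validators where advancing to round r requires receiving n-f distinct-author vertices of round r-1, if at least n-f honest validators broadcast a vertex in every round and all broadcasts are eventually delivered, then every honest validator advances through infinitely many rounds (the DAG construction is live without timeouts). -/
/-- Liveness of the DAG construction without timeouts: with `n` validators of which
at least `n - f` are honest and broadcast a vertex in every round they reach, and
with eventual delivery of honest broadcasts, every honest validator advances through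
every round.  `enters i r` means validator `i` (eventually) enters round `r`;
`delivered i v r` means `i` eventually receives `v`'s round-`r` vertex. -/
theorem dag_construction_live_without_timeouts
    {n f : ℕ} {V : Type} [Fintype V] (hn : Fintype.card V = n)
    (Honest : Finset V) (hHonest : n - f ≤ Honest.card)
    (enters : V → ℕ → Prop) (delivered : V → V → ℕ → Prop)
    -- honest validators broadcast in every round they enter, and honest
    -- broadcasts are eventually delivered to all honest validators:
    (hbcast : ∀ v ∈ Honest, ∀ r, enters v r → ∀ i ∈ Honest, delivered i v r)
    -- a validator enters round r+1 once it has received n - f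
    -- distinct-author round-r vertices:
    (hadv : ∀ i : V, ∀ r : ℕ,
      (∃ S : Finset V, n - f ≤ S.card ∧ ∀ v ∈ S, delivered i v r) → enters i (r + 1))
    -- every honest validator starts in round 0:
    (hbase : ∀ i ∈ Honest, enters i 0) :
    ∀ i ∈ Honest, ∀ r : ℕ, enters i r := by
  have key : ∀ r : ℕ, ∀ i ∈ Honest, enters i r := by
    intro r
    induction r with
    | zero => exact hbase
    | succ r ih =>
      intro i hi
      exact hadv i r ⟨Honest, hHonest, fun v hv => hbcast v hv r (ih v hv) i hi⟩
  exact fun i hi r => key r i hi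
end
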